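/- Assume |V| ≥ 3. For every Hamiltonian tour τ of G there exists a perfect matching of G' whose weight equals w(τ). Consequently, a maximum-weight perfect matching of G' has weight at least OPT, the maximum weight of a tour. -/

import Mathlib

/-- Vertices of the auxiliary undirected graph `G'`. -/
inductive GV (V : Type*) where
  | vin : V → GV V
  | vout : V → GV V
  | e1 : V → V → GV V
  | e2 : V → V → GV V
  | a : V → V → GV V
  | b : V → V → GV V
  deriving DecidableEq

/-- Membership in the vertex set `V'` of `G'` (gadget vertices `a_{u,v}`,
`b_{u,v}` exist for 2-cycles of `C_max`, represented with `u < v`). -/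
def GVmem {V : Type*} [LinearOrder V] (Cmax : Equiv.Perm V) : GV V → Prop
  | .vin _ => True
  | .vout _ => True
  | .e1 u v => u ≠ v
  | .e2 u v => u ≠ v
  | .a u v => u < v ∧ Cmax u = v ∧ Cmax v = u
  | .b u v => u < v ∧ Cmax u = v ∧ Cmax v = u

/-- The edges of `G'` in canonical orientation. -/
def IsEdgeG' {V : Type*} [LinearOrder V] (Cmax : Equiv.Perm V) :
    GV V → GV V → Prop
  | .e1 u v, .e2 u' v' => u = u' ∧ v = v' ∧ u ≠ v
  | .vout u, .e1 u' v => u = u' ∧ u ≠ v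
  | .vin v, .e2 u v' => v = v' ∧ u ≠ v
  | .a u v, .e1 u' v' => u = u' ∧ v = v' ∧ u < v ∧ Cmax u = v ∧ Cmax v = u
  | .a u v, .e2 v' u' => v = v' ∧ u = u' ∧ u < v ∧ Cmax u = v ∧ Cmax v = u
  | .b u v, .e1 v' u' => v = v' ∧ u = u' ∧ u < v ∧ Cmax u = v ∧ Cmax v = u
  | .b u v, .e2 u' v' => u = u' ∧ v = v' ∧ u < v ∧ Cmax u = v ∧ Cmax v = u
  | _, _ => False

/-- A perfect matching of `G'`. -/
def IsPerfectMatching {V : Type*} [LinearOrder V] (Cmax : Equiv.Perm V)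
    (M : Finset (GV V × GV V)) : Prop :=
  (∀ p ∈ M, IsEdgeG' Cmax p.1 p.2) ∧
    ∀ x : GV V, GVmem Cmax x → ∃! p : GV V × GV V, p ∈ M ∧ (p.1 = x ∨ p.2 = x)

/-- The weight of a (canonically oriented) edge of `G'`: the edges
`{u_out, e¹_uv}` and `{v_in, e²_uv}` have weight `w(u,v)/2`, all other edges
have weight `0`. -/
noncomputable def ewt {V : Type*} [DecidableEq V] (w : V → V → ℝ) : GV V × GV V → ℝ
  | (.vout u, .e1 u' v) => if u = u' then w u v / 2 else 0
  | (.vin v, .e2 u v') => if v = v' then w u v / 2 else 0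
  | _ => 0

set_option linter.unusedSectionVars false

section Aux
variable {V : Type*} [Fintype V] [LinearOrder V] {Cmax τ : Equiv.Perm V}

def edgesFor (Cmax τ : Equiv.Perm V) (u v : V) : Finset (GV V × GV V) :=
  if τ u = v then {(GV.vout u, GV.e1 u v), (GV.vin v, GV.e2 u v)}
  else if Cmax u = v ∧ Cmax v = u then
    if u < v then {(GV.a u v, GV.e1 u v), (GV.b u v, GV.e2 u v)}
    else if τ v = u then {(GV.a v u, GV.e2 u v), (GV.b v u, GV.e1 u v)}
    else {(GV.e1 u v, GV.e2 u v)}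
  else {(GV.e1 u v, GV.e2 u v)}

def tourM (Cmax τ : Equiv.Perm V) : Finset (GV V × GV V) :=
  ((Finset.univ ×ˢ Finset.univ).filter fun p : V × V => p.1 ≠ p.2).biUnion
    fun p => edgesFor Cmax τ p.1 p.2

lemma mem_tourM {p : GV V × GV V} :
    p ∈ tourM Cmax τ ↔ ∃ u v : V, u ≠ v ∧ p ∈ edgesFor Cmax τ u v := by
  simp only [tourM, Finset.mem_biUnion, Finset.mem_filter, Finset.mem_product,
    Finset.mem_univ, true_and, Prod.exists]

lemma mem_edgesFor_cases {u v : V} {p : GV V × GV V} (h : p ∈ edgesFor Cmax τ u v) :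
    (τ u = v ∧ (p = (GV.vout u, GV.e1 u v) ∨ p = (GV.vin v, GV.e2 u v))) ∨
    (τ u ≠ v ∧ Cmax u = v ∧ Cmax v = u ∧ u < v ∧
      (p = (GV.a u v, GV.e1 u v) ∨ p = (GV.b u v, GV.e2 u v))) ∨
    (τ u ≠ v ∧ Cmax u = v ∧ Cmax v = u ∧ ¬u < v ∧ τ v = u ∧
      (p = (GV.a v u, GV.e2 u v) ∨ p = (GV.b v u, GV.e1 u v))) ∨
    (τ u ≠ v ∧ (¬(Cmax u = v ∧ Cmax v = u) ∨ (¬u < v ∧ ¬τ v = u)) ∧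
      p = (GV.e1 u v, GV.e2 u v)) := by
  unfold edgesFor at h
  split_ifs at h with h1 h2 h3 h4 <;>
    simp only [Finset.mem_insert, Finset.mem_singleton] at h <;>
    tauto

lemma snd_mem_edgesFor {u v : V} {p : GV V × GV V}
    (h : p ∈ edgesFor Cmax τ u v) : p.2 = GV.e1 u v ∨ p.2 = GV.e2 u v := by
  rcases mem_edgesFor_cases h with ⟨_, rfl | rfl⟩ | ⟨_, _, _, _, rfl | rfl⟩ |
    ⟨_, _, _, _, _, rfl | rfl⟩ | ⟨_, _, rfl⟩ <;> simp

lemma edgesFor_valid {u v : V} (huv : u ≠ v) {p : GV V × GV V}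
    (h : p ∈ edgesFor Cmax τ u v) : IsEdgeG' Cmax p.1 p.2 := by
  have hvu : ¬u < v → v < u := fun h' => lt_of_le_of_ne (not_lt.mp h') (Ne.symm huv)
  rcases mem_edgesFor_cases h with ⟨h1, rfl | rfl⟩ | ⟨h1, h2, h3, h4, rfl | rfl⟩ |
    ⟨h1, h2, h3, h4, h5, rfl | rfl⟩ | ⟨h1, h2, rfl⟩
  · exact ⟨rfl, huv⟩
  · exact ⟨rfl, huv⟩
  · exact ⟨rfl, rfl, h4, h2, h3⟩
  · exact ⟨rfl, rfl, h4, h2, h3⟩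
  · exact ⟨rfl, rfl, hvu h4, h3, h2⟩
  · exact ⟨rfl, rfl, hvu h4, h3, h2⟩
  · exact ⟨rfl, rfl, huv⟩



def witnessE1 (Cmax τ : Equiv.Perm V) (u v : V) : GV V × GV V :=
  if τ u = v then (GV.vout u, GV.e1 u v)
  else if Cmax u = v ∧ Cmax v = u then
    if u < v then (GV.a u v, GV.e1 u v)
    else if τ v = u then (GV.b v u, GV.e1 u v)
    else (GV.e1 u v, GV.e2 u v)
  else (GV.e1 u v, GV.e2 u v)

def witnessE2 (Cmax τ : Equiv.Perm V) (u v : V) : GV V × GV V :=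
  if τ u = v then (GV.vin v, GV.e2 u v)
  else if Cmax u = v ∧ Cmax v = u then
    if u < v then (GV.b u v, GV.e2 u v)
    else if τ v = u then (GV.a v u, GV.e2 u v)
    else (GV.e1 u v, GV.e2 u v)
  else (GV.e1 u v, GV.e2 u v)

lemma witnessE1_mem (u v : V) : witnessE1 Cmax τ u v ∈ edgesFor Cmax τ u v := by
  unfold witnessE1 edgesFor
  split_ifs <;> simp

lemma witnessE2_mem (u v : V) : witnessE2 Cmax τ u v ∈ edgesFor Cmax τ u v := by
  unfold witnessE2 edgesFor
  split_ifs <;> simp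

lemma touch_e1 {u' v' u v : V} {p : GV V × GV V} (hp : p ∈ edgesFor Cmax τ u' v')
    (hx : p.1 = GV.e1 u v ∨ p.2 = GV.e1 u v) :
    u' = u ∧ v' = v ∧ p = witnessE1 Cmax τ u v := by
  rcases mem_edgesFor_cases hp with ⟨h1, rfl | rfl⟩ | ⟨h1, h2, h3, h4, rfl | rfl⟩ |
    ⟨h1, h2, h3, h4, h5, rfl | rfl⟩ | ⟨h1, h2, rfl⟩ <;>
    simp only [GV.e1.injEq, reduceCtorEq, or_false, false_or, or_self] at hx <;>
    obtain ⟨rfl, rfl⟩ := hx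
  · exact ⟨rfl, rfl, by simp [witnessE1, h1]⟩
  · exact ⟨rfl, rfl, by simp [witnessE1, h1, h2, h3, h4]⟩
  · exact ⟨rfl, rfl, by simp [witnessE1, h1, h2, h3, h4, h5]⟩
  · refine ⟨rfl, rfl, ?_⟩
    unfold witnessE1
    rcases h2 with h2 | ⟨h3, h4⟩
    · rw [if_neg h1, if_neg h2]
    · rw [if_neg h1]
      split_ifs <;> rfl

lemma touch_e2 {u' v' u v : V} {p : GV V × GV V} (hp : p ∈ edgesFor Cmax τ u' v')
    (hx : p.1 = GV.e2 u v ∨ p.2 = GV.e2 u v) :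
    u' = u ∧ v' = v ∧ p = witnessE2 Cmax τ u v := by
  rcases mem_edgesFor_cases hp with ⟨h1, rfl | rfl⟩ | ⟨h1, h2, h3, h4, rfl | rfl⟩ |
    ⟨h1, h2, h3, h4, h5, rfl | rfl⟩ | ⟨h1, h2, rfl⟩ <;>
    simp only [GV.e2.injEq, reduceCtorEq, or_false, false_or, or_self] at hx <;>
    obtain ⟨rfl, rfl⟩ := hx
  · exact ⟨rfl, rfl, by simp [witnessE2, h1]⟩
  · exact ⟨rfl, rfl, by simp [witnessE2, h1, h2, h3, h4]⟩
  · exact ⟨rfl, rfl, by simp [witnessE2, h1, h2, h3, h4, h5]⟩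
  · refine ⟨rfl, rfl, ?_⟩
    unfold witnessE2
    rcases h2 with h2 | ⟨h3, h4⟩
    · rw [if_neg h1, if_neg h2]
    · rw [if_neg h1]
      split_ifs <;> rfl

lemma cover_vin (hfix : ∀ z, τ z ≠ z) (y : V) :
    ∃! p : GV V × GV V, p ∈ tourM Cmax τ ∧ (p.1 = GV.vin y ∨ p.2 = GV.vin y) := by
  refine ⟨(GV.vin y, GV.e2 (τ⁻¹ y) y), ⟨?_, Or.inl rfl⟩, ?_⟩
  · rw [mem_tourM]
    refine ⟨τ⁻¹ y, y, fun h => hfix y (by conv_lhs => rw [← h, Equiv.Perm.coe_inv, Equiv.apply_symm_apply]), ?_⟩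
    simp [edgesFor, Equiv.Perm.coe_inv, Equiv.apply_symm_apply]
  · rintro p ⟨hm, hx⟩
    rw [mem_tourM] at hm
    obtain ⟨u, v, huv, hp⟩ := hm
    rcases mem_edgesFor_cases hp with ⟨h1, rfl | rfl⟩ | ⟨h1, h2, h3, h4, rfl | rfl⟩ |
      ⟨h1, h2, h3, h4, h5, rfl | rfl⟩ | ⟨h1, h2, rfl⟩ <;>
      simp only [GV.vin.injEq, reduceCtorEq, or_false, false_or, or_self] at hx
    subst hx
    obtain rfl : u = τ⁻¹ v := by rw [← h1]; simp
    rfl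

lemma cover_vout (hfix : ∀ z, τ z ≠ z) (y : V) :
    ∃! p : GV V × GV V, p ∈ tourM Cmax τ ∧ (p.1 = GV.vout y ∨ p.2 = GV.vout y) := by
  refine ⟨(GV.vout y, GV.e1 y (τ y)), ⟨?_, Or.inl rfl⟩, ?_⟩
  · rw [mem_tourM]
    exact ⟨y, τ y, Ne.symm (hfix y), by simp [edgesFor]⟩
  · rintro p ⟨hm, hx⟩
    rw [mem_tourM] at hm
    obtain ⟨u, v, huv, hp⟩ := hm
    rcases mem_edgesFor_cases hp with ⟨h1, rfl | rfl⟩ | ⟨h1, h2, h3, h4, rfl | rfl⟩ |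
      ⟨h1, h2, h3, h4, h5, rfl | rfl⟩ | ⟨h1, h2, rfl⟩ <;>
      simp only [GV.vout.injEq, reduceCtorEq, or_false, false_or, or_self] at hx
    subst hx
    obtain rfl : v = τ u := h1.symm
    rfl

lemma cover_e1 (u v : V) (huv : u ≠ v) :
    ∃! p : GV V × GV V, p ∈ tourM Cmax τ ∧ (p.1 = GV.e1 u v ∨ p.2 = GV.e1 u v) := by
  refine ⟨witnessE1 Cmax τ u v, ⟨mem_tourM.mpr ⟨u, v, huv, witnessE1_mem u v⟩, ?_⟩, ?_⟩
  · unfold witnessE1; split_ifs <;> simp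
  · rintro p ⟨hm, hx⟩
    rw [mem_tourM] at hm
    obtain ⟨u', v', huv', hp⟩ := hm
    exact (touch_e1 hp hx).2.2

lemma cover_e2 (u v : V) (huv : u ≠ v) :
    ∃! p : GV V × GV V, p ∈ tourM Cmax τ ∧ (p.1 = GV.e2 u v ∨ p.2 = GV.e2 u v) := by
  refine ⟨witnessE2 Cmax τ u v, ⟨mem_tourM.mpr ⟨u, v, huv, witnessE2_mem u v⟩, ?_⟩, ?_⟩
  · unfold witnessE2; split_ifs <;> simp
  · rintro p ⟨hm, hx⟩
    rw [mem_tourM] at hm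
    obtain ⟨u', v', huv', hp⟩ := hm
    exact (touch_e2 hp hx).2.2

lemma cover_a (ht2 : ∀ z, τ (τ z) ≠ z) (u v : V) (hlt : u < v)
    (hc1 : Cmax u = v) (hc2 : Cmax v = u) :
    ∃! p : GV V × GV V, p ∈ tourM Cmax τ ∧ (p.1 = GV.a u v ∨ p.2 = GV.a u v) := by
  by_cases h1 : τ u = v
  · refine ⟨(GV.a u v, GV.e2 v u), ⟨?_, Or.inl rfl⟩, ?_⟩
    · rw [mem_tourM]
      refine ⟨v, u, hlt.ne', ?_⟩
      have hτv : τ v ≠ u := fun h => ht2 u (by rw [h1, h])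
      simp [edgesFor, hτv, hc1, hc2, h1, not_lt.mpr hlt.le]
    · rintro p ⟨hm, hx⟩
      rw [mem_tourM] at hm
      obtain ⟨u', v', huv', hp⟩ := hm
      rcases mem_edgesFor_cases hp with ⟨ha, rfl | rfl⟩ | ⟨ha, hb, hc, hd, rfl | rfl⟩ |
        ⟨ha, hb, hc, hd, he, rfl | rfl⟩ | ⟨ha, hb, rfl⟩ <;>
        simp only [GV.a.injEq, reduceCtorEq, or_false, false_or, or_self] at hx
      · obtain ⟨rfl, rfl⟩ := hx; exact absurd h1 ha
      · obtain ⟨rfl, rfl⟩ := hx; rfl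
  · refine ⟨(GV.a u v, GV.e1 u v), ⟨?_, Or.inl rfl⟩, ?_⟩
    · rw [mem_tourM]
      exact ⟨u, v, hlt.ne, by simp [edgesFor, h1, hc1, hc2, hlt]⟩
    · rintro p ⟨hm, hx⟩
      rw [mem_tourM] at hm
      obtain ⟨u', v', huv', hp⟩ := hm
      rcases mem_edgesFor_cases hp with ⟨ha, rfl | rfl⟩ | ⟨ha, hb, hc, hd, rfl | rfl⟩ |
        ⟨ha, hb, hc, hd, he, rfl | rfl⟩ | ⟨ha, hb, rfl⟩ <;>
        simp only [GV.a.injEq, reduceCtorEq, or_false, false_or, or_self] at hx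
      · obtain ⟨rfl, rfl⟩ := hx; rfl
      · obtain ⟨rfl, rfl⟩ := hx; exact absurd he h1

lemma cover_b (ht2 : ∀ z, τ (τ z) ≠ z) (u v : V) (hlt : u < v)
    (hc1 : Cmax u = v) (hc2 : Cmax v = u) :
    ∃! p : GV V × GV V, p ∈ tourM Cmax τ ∧ (p.1 = GV.b u v ∨ p.2 = GV.b u v) := by
  by_cases h1 : τ u = v
  · refine ⟨(GV.b u v, GV.e1 v u), ⟨?_, Or.inl rfl⟩, ?_⟩
    · rw [mem_tourM]
      refine ⟨v, u, hlt.ne', ?_⟩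
      have hτv : τ v ≠ u := fun h => ht2 u (by rw [h1, h])
      simp [edgesFor, hτv, hc1, hc2, h1, not_lt.mpr hlt.le]
    · rintro p ⟨hm, hx⟩
      rw [mem_tourM] at hm
      obtain ⟨u', v', huv', hp⟩ := hm
      rcases mem_edgesFor_cases hp with ⟨ha, rfl | rfl⟩ | ⟨ha, hb, hc, hd, rfl | rfl⟩ |
        ⟨ha, hb, hc, hd, he, rfl | rfl⟩ | ⟨ha, hb, rfl⟩ <;>
        simp only [GV.b.injEq, reduceCtorEq, or_false, false_or, or_self] at hx
      · obtain ⟨rfl, rfl⟩ := hx; exact absurd h1 ha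
      · obtain ⟨rfl, rfl⟩ := hx; rfl
  · refine ⟨(GV.b u v, GV.e2 u v), ⟨?_, Or.inl rfl⟩, ?_⟩
    · rw [mem_tourM]
      exact ⟨u, v, hlt.ne, by simp [edgesFor, h1, hc1, hc2, hlt]⟩
    · rintro p ⟨hm, hx⟩
      rw [mem_tourM] at hm
      obtain ⟨u', v', huv', hp⟩ := hm
      rcases mem_edgesFor_cases hp with ⟨ha, rfl | rfl⟩ | ⟨ha, hb, hc, hd, rfl | rfl⟩ |
        ⟨ha, hb, hc, hd, he, rfl | rfl⟩ | ⟨ha, hb, rfl⟩ <;>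
        simp only [GV.b.injEq, reduceCtorEq, or_false, false_or, or_self] at hx
      · obtain ⟨rfl, rfl⟩ := hx; rfl
      · obtain ⟨rfl, rfl⟩ := hx; exact absurd he h1

lemma edgesFor_disj :
    (↑((Finset.univ ×ˢ Finset.univ).filter fun p : V × V => p.1 ≠ p.2) :
      Set (V × V)).PairwiseDisjoint (fun p : V × V => edgesFor Cmax τ p.1 p.2) := by
  intro p _ q _ hne
  simp only [Function.onFun, Finset.disjoint_left]
  intro x hx hx'
  rcases snd_mem_edgesFor hx with h | h <;> rcases snd_mem_edgesFor hx' with h' | h' <;>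
    (have := h.symm.trans h'; simp only [GV.e1.injEq, GV.e2.injEq, reduceCtorEq] at this) <;>
    exact hne (Prod.ext this.1 this.2)

lemma sum_edgesFor (w : V → V → ℝ) (u v : V) :
    ∑ p ∈ edgesFor Cmax τ u v, ewt w p = if τ u = v then w u v else 0 := by
  unfold edgesFor
  split_ifs with h1 h2 h3 h4
  · rw [Finset.sum_pair (by simp)]
    show (if u = u then w u v / 2 else 0) + (if v = v then w u v / 2 else 0) = w u v
    simp
  · rw [Finset.sum_pair (by simp)]
    show (0 : ℝ) + 0 = 0
    ring
  · rw [Finset.sum_pair (by simp)]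
    show (0 : ℝ) + 0 = 0
    ring
  · rw [Finset.sum_singleton]
    rfl
  · rw [Finset.sum_singleton]
    rfl

lemma sum_tourM (hfix : ∀ z, τ z ≠ z) (w : V → V → ℝ) :
    ∑ p ∈ tourM Cmax τ, ewt w p = ∑ v, w v (τ v) := by
  rw [tourM, Finset.sum_biUnion edgesFor_disj]
  rw [Finset.sum_filter]
  have : ∀ q ∈ (Finset.univ ×ˢ Finset.univ : Finset (V × V)),
      (if q.1 ≠ q.2 then ∑ p ∈ edgesFor Cmax τ q.1 q.2, ewt w p else 0) =
      (if τ q.1 = q.2 then w q.1 q.2 else 0) := by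
    intro q _
    by_cases hq : q.1 ≠ q.2
    · rw [if_pos hq, sum_edgesFor]
    · push_neg at hq
      rw [if_neg (by simpa using hq), if_neg (by rw [← hq]; exact hfix q.1)]
  rw [Finset.sum_congr rfl this, Finset.sum_product]
  refine Finset.sum_congr rfl fun u _ => ?_
  simp [Finset.sum_ite_eq]

lemma no_two_cycle (hV : 3 ≤ Fintype.card V) (hτc : τ.IsCycle)
    (hfix : ∀ z, τ z ≠ z) : ∀ z, τ (τ z) ≠ z := by
  intro z h
  have h1 : τ z ≠ z := hfix z
  have hinv : τ⁻¹ z = τ z := by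
    conv_lhs => rw [← h]
    exact Equiv.symm_apply_apply τ (τ z)
  have hinv2 : τ⁻¹ (τ z) = z := Equiv.symm_apply_apply τ z
  have hy : ∃ y : V, y ≠ z ∧ y ≠ τ z := by
    by_contra hc
    push_neg at hc
    have hsub : (Finset.univ : Finset V) ⊆ {z, τ z} := by
      intro y _
      by_cases hyz : y = z
      · simp [hyz]
      · simp [hc y hyz]
    have := Finset.card_le_card hsub
    have h2 : ({z, τ z} : Finset V).card ≤ 2 := Finset.card_insert_le _ _ |>.trans (by simp)
    simp only [Finset.card_univ] at this
    omega
  obtain ⟨y, hyz, hyτ⟩ := hy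
  obtain ⟨i, hi⟩ := hτc.sameCycle (hfix z) (hfix y)
  have key : ∀ i : ℤ, (τ ^ i) z = z ∨ (τ ^ i) z = τ z := by
    intro i
    induction i using Int.induction_on with
    | zero => left; simp
    | succ k ih =>
      rw [show (k : ℤ) + 1 = 1 + k by ring, zpow_add, zpow_one, Equiv.Perm.mul_apply]
      rcases ih with h' | h'
      · right; rw [h']
      · left; rw [h', h]
    | pred k ih =>
      rw [show (-(k : ℤ) - 1) = (-1) + (-k) by ring, zpow_add, zpow_neg_one,
        Equiv.Perm.mul_apply]
      rcases ih with h' | h'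
      · right; rw [h', hinv]
      · left; rw [h', hinv2]
  rcases key i with h' | h' <;> rw [hi] at h'
  · exact hyz h'
  · exact hyτ h'

end Aux

/-- if `|V| ≥ 3`, then for every Hamiltonian tour `τ` of `G`
there is a perfect matching of `G'` whose weight equals `w(τ)`; consequently a
maximum-weight perfect matching `M*` of `G'` has weight at least `w(τ)`, hence
at least `OPT`. -/
theorem stmt_10 {V : Type*} [Fintype V] [LinearOrder V]
    (hV : 3 ≤ Fintype.card V)
    (w : V → V → ℝ) (hw : ∀ u v : V, u ≠ v → 0 ≤ w u v)
    (Cmax : Equiv.Perm V) (hCmax : ∀ v, Cmax v ≠ v)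
    (hmax : ∀ σ' : Equiv.Perm V, (∀ v, σ' v ≠ v) →
      ∑ v, w v (σ' v) ≤ ∑ v, w v (Cmax v))
    (τ : Equiv.Perm V) (hτ : τ.IsCycle) (hτs : τ.support = Finset.univ)
    (Mstar : Finset (GV V × GV V)) (hMstar : IsPerfectMatching Cmax Mstar)
    (hMstarMax : ∀ M : Finset (GV V × GV V), IsPerfectMatching Cmax M →
      ∑ p ∈ M, ewt w p ≤ ∑ p ∈ Mstar, ewt w p) :
    (∃ M : Finset (GV V × GV V), IsPerfectMatching Cmax M ∧
        ∑ p ∈ M, ewt w p = ∑ v, w v (τ v)) ∧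
      ∑ v, w v (τ v) ≤ ∑ p ∈ Mstar, ewt w p := by
  have hfix : ∀ z, τ z ≠ z := fun z =>
    Equiv.Perm.mem_support.mp (by rw [hτs]; exact Finset.mem_univ z)
  have ht2 : ∀ z, τ (τ z) ≠ z := no_two_cycle hV hτ hfix
  have hpm : IsPerfectMatching Cmax (tourM Cmax τ) := by
    constructor
    · intro p hp
      rw [mem_tourM] at hp
      obtain ⟨u, v, huv, hp⟩ := hp
      exact edgesFor_valid huv hp
    · intro x hx
      cases x with
      | vin y => exact cover_vin hfix y
      | vout y => exact cover_vout hfix y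
      | e1 u v => exact cover_e1 u v hx
      | e2 u v => exact cover_e2 u v hx
      | a u v => exact cover_a ht2 u v hx.1 hx.2.1 hx.2.2
      | b u v => exact cover_b ht2 u v hx.1 hx.2.1 hx.2.2
  have hsum := sum_tourM (Cmax := Cmax) hfix w
  exact ⟨⟨tourM Cmax τ, hpm, hsum⟩, hsum ▸ hMstarMax _ hpm⟩
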